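/- Let A = {x : aᵢ·x ≤ bᵢ, i ∈ I} be a polytope, γ > 0, g_A(x, γ) = ReLU(Σ_{i∈I} g(bᵢ - aᵢ·x, γ) - |I| + 1) with g(t, γ) = ReLU(1+γt) - ReLU(γt), K ≥ 0, p affine, and h(x, γ) = ReLU(p(x) + K·g_A(x, γ) - K) - ReLU(-p(x) + K·g_A(x, γ) - K). If f : ℝⁿ → ℝ satisfies f(x) + p(x) ∈ Φ for all x ∈ A, where Φ ⊆ ℝ is any set, then the repaired function f̂(x) = f(x) + h(x, γ) satisfies f̂(x) ∈ Φ for all x ∈ A. -/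
import Mathlib


/-- Single-region soundness: the repaired function f + h satisfies the spec on A. -/
theorem single_region_soundness {n : ℕ} {ι : Type*} (I : Finset ι)
    (a : ι → Fin n → ℝ) (b : ι → ℝ) (γ : ℝ) (hγ : 0 < γ)
    (g : ℝ → ℝ) (hg : ∀ t, g t = max (1 + γ * t) 0 - max (γ * t) 0)
    (A : Set (Fin n → ℝ)) (hA : A = {x | ∀ i ∈ I, ∑ j, a i j * x j ≤ b i})
    (gA : (Fin n → ℝ) → ℝ)
    (hgA : ∀ x, gA x = max (∑ i ∈ I, g (b i - ∑ j, a i j * x j) - I.card + 1) 0)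
    (K : ℝ) (hK : 0 ≤ K) (p : (Fin n → ℝ) →ᵃ[ℝ] ℝ)
    (h : (Fin n → ℝ) → ℝ)
    (hh : ∀ x, h x = max (p x + K * gA x - K) 0 - max (-p x + K * gA x - K) 0)
    (Φ : Set ℝ) (f : (Fin n → ℝ) → ℝ) (hf : ∀ x ∈ A, f x + p x ∈ Φ)
    (fhat : (Fin n → ℝ) → ℝ) (hfhat : ∀ x, fhat x = f x + h x) :
    ∀ x ∈ A, fhat x ∈ Φ := by
  intro x hx
  have hx' : ∀ i ∈ I, ∑ j, a i j * x j ≤ b i := by rw [hA] at hx; exact hx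
  have hgone : ∀ i ∈ I, g (b i - ∑ j, a i j * x j) = 1 := by
    intro i hi
    have ht : 0 ≤ b i - ∑ j, a i j * x j := by linarith [hx' i hi]
    have h1 : 0 ≤ γ * (b i - ∑ j, a i j * x j) := mul_nonneg hγ.le ht
    rw [hg]
    rw [max_eq_left (by linarith), max_eq_left h1]
    ring
  have hsum : ∑ i ∈ I, g (b i - ∑ j, a i j * x j) = I.card := by
    rw [Finset.sum_congr rfl hgone]; simp
  have hgA1 : gA x = 1 := by
    rw [hgA, hsum]
    rw [show ((I.card : ℝ) - I.card + 1) = 1 by ring]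
    norm_num
  have hhx : h x = p x := by
    rw [hh, hgA1]
    rw [show p x + K * 1 - K = p x by ring, show -p x + K * 1 - K = -p x by ring]
    rcases le_total (p x) 0 with h0 | h0
    · rw [max_eq_right h0, max_eq_left (by linarith)]; ring
    · rw [max_eq_left h0, max_eq_right (by linarith)]; ring
  rw [hfhat, hhx]
  exact hf x hx
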